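/- arXiv:math/0501053 — 2 statements merged into one kernel-verified Lean document; each statement's English description precedes it below -/
import Mathlib

section
/- For every n ≥ 3 the following hold: (i) for every f ∈ [IA_n, IA_n] and every x ∈ F_n, the element f(x)·x^{-1} lies in F_n^{(3)}; (ii) for each f ∈ [IA_n, IA_n], the assignment sending the class of x in F_n/F_n^{(2)} to the class of f(x)·x^{-1} in F_n^{(3)}/F_n^{(4)} is a well-defined group homomorphism δ^{(2)}(f) : F_n/F_n^{(2)} → F_n^{(3)}/F_n^{(4)}; (iii) the resulting map δ^{(2)} from [IA_n, IA_n] to the abelian group Hom(F_n/F_n^{(2)}, F_n^{(3)}/F_n^{(4)}) (under pointwise addition) is a group homomorphism. -/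
/-- The subgroup of `Aut(F_n)` of automorphisms acting trivially on
`F_n / F_n^{(i+1)}`, where `F_n^{(k+1)} = lowerCentralSeries F_n k`. -/
def KSub (n i : ℕ) : Subgroup (MulAut (FreeGroup (Fin n))) where
  carrier := {φ | ∀ x, φ x * x⁻¹ ∈ (⊤ : Subgroup (FreeGroup (Fin n))).lowerCentralSeries i}
  one_mem' := by intro x; simpa using ((⊤ : Subgroup (FreeGroup (Fin n))).lowerCentralSeries i).one_mem
  mul_mem' := by
    intro a b ha hb x
    have h : (a * b) x * x⁻¹ = (a (b x) * (b x)⁻¹) * (b x * x⁻¹) := by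
      simp [MulAut.mul_apply, mul_assoc]
    rw [h]
    exact mul_mem (ha (b x)) (hb x)
  inv_mem' := by
    intro a ha x
    have h := inv_mem (ha (a⁻¹ x))
    simp only [MulAut.apply_inv_self, mul_inv_rev, inv_inv] at h
    simpa using h

/-- `IA_n`, the group of automorphisms of the free group `F_n` acting trivially on
its abelianization. -/
def IA (n : ℕ) : Subgroup (MulAut (FreeGroup (Fin n))) := KSub n 1

instance KSub_normal (n i : ℕ) : (KSub n i).Normal := by
  constructor
  intro φ hφ ψ x
  have h2 : ψ (φ (ψ⁻¹ x) * (ψ⁻¹ x)⁻¹) ∈ (⊤ : Subgroup (FreeGroup (Fin n))).lowerCentralSeries i := by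
    apply Subgroup.lowerCentralSeries.map (ψ : FreeGroup (Fin n) →* FreeGroup (Fin n)) i
    exact Subgroup.mem_map_of_mem _ (hφ (ψ⁻¹ x))
  simpa [MulAut.mul_apply, map_mul] using h2

abbrev Fr (n : ℕ) := FreeGroup (Fin n)
abbrev L (n i : ℕ) : Subgroup (Fr n) := (⊤ : Subgroup (Fr n)).lowerCentralSeries i
abbrev Q34 (n : ℕ) := L n 2 ⧸ ((L n 3).subgroupOf (L n 2))

open commutatorElement

lemma mem_KSub {n i : ℕ} {f : MulAut (FreeGroup (Fin n))} :
    f ∈ KSub n i ↔ ∀ x, f x * x⁻¹ ∈ (⊤ : Subgroup (FreeGroup (Fin n))).lowerCentralSeries i := Iff.rfl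

lemma L_succ_left {n k : ℕ} {u : Fr n} (x : Fr n) (hu : u ∈ L n k) : ⁅u, x⁆ ∈ L n (k+1) :=
  Subgroup.commutator_mem_commutator hu (Subgroup.mem_top x)

lemma L_succ_right {n k : ℕ} {u : Fr n} (x : Fr n) (hu : u ∈ L n k) : ⁅x, u⁆ ∈ L n (k+1) := by
  have h := inv_mem (L_succ_left x hu)
  rwa [commutatorElement_inv] at h

lemma bridge {G : Type*} [Group G] (N : Subgroup G) [N.Normal] (a b : G) :
    a * b⁻¹ ∈ N ↔ (QuotientGroup.mk a : G ⧸ N) = QuotientGroup.mk b := by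
  rw [← QuotientGroup.eq_one_iff (a * b⁻¹), QuotientGroup.mk_mul, QuotientGroup.mk_inv,
    mul_inv_eq_one]

lemma mk_central {n k : ℕ} {u : Fr n} (hu : u ∈ L n k) :
    (QuotientGroup.mk u : Fr n ⧸ L n (k+1)) ∈ Subgroup.center (Fr n ⧸ L n (k+1)) := by
  rw [Subgroup.mem_center_iff]
  intro q
  refine QuotientGroup.induction_on q fun x => ?_
  rw [← QuotientGroup.mk_mul, ← QuotientGroup.mk_mul, QuotientGroup.eq]
  have h : (x * u)⁻¹ * (u * x) = ⁅u⁻¹, x⁻¹⁆ := by group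
  rw [h]
  exact L_succ_left _ (inv_mem hu)

lemma comm_center_left {G : Type*} [Group G] {c : G} (hc : c ∈ Subgroup.center G) (a b : G) :
    ⁅c * a, b⁆ = ⁅a, b⁆ := by
  have h := Subgroup.mem_center_iff.mp hc
  have e1 : ⁅c * a, b⁆ = c * (a * b * a⁻¹) * c⁻¹ * b⁻¹ := by group
  rw [e1, ← h (a * b * a⁻¹)]
  group

lemma comm_center_right {G : Type*} [Group G] {d : G} (hd : d ∈ Subgroup.center G) (a b : G) :
    ⁅a, d * b⁆ = ⁅a, b⁆ := by
  rw [← commutatorElement_inv (d * b) a, comm_center_left hd, commutatorElement_inv]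

lemma fix_L1 {n k : ℕ} (f : MulAut (Fr n)) (hf : ∀ x, f x * x⁻¹ ∈ L n k)
    {u : Fr n} (hu : u ∈ L n 1) :
    (QuotientGroup.mk (f u) : Fr n ⧸ L n (k+1)) = QuotientGroup.mk u := by
  have hset : u ∈ Subgroup.closure {g : Fr n | ∃ g₁ ∈ (⊤ : Subgroup (Fr n)),
      ∃ g₂ ∈ (⊤ : Subgroup (Fr n)), ⁅g₁, g₂⁆ = g} := by
    rw [← Subgroup.commutator_def]; exact hu
  refine Subgroup.closure_induction
    (p := fun v _ => (QuotientGroup.mk (f v) : Fr n ⧸ L n (k+1)) = QuotientGroup.mk v)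
    ?_ (by simp) ?_ ?_ hset
  · rintro v ⟨a, -, b, -, rfl⟩
    have hmk : ∀ y : Fr n, (QuotientGroup.mk (f y) : Fr n ⧸ L n (k+1)) =
        QuotientGroup.mk (f y * y⁻¹) * QuotientGroup.mk y := by
      intro y; rw [← QuotientGroup.mk_mul, inv_mul_cancel_right]
    have e : f ⁅a, b⁆ = ⁅f a, f b⁆ := by
      simp [commutatorElement_def, map_mul, map_inv]
    have e2 : (QuotientGroup.mk ⁅f a, f b⁆ : Fr n ⧸ L n (k+1)) =
        ⁅(QuotientGroup.mk (f a) : Fr n ⧸ L n (k+1)), QuotientGroup.mk (f b)⁆ := by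
      simp [commutatorElement_def]; rfl
    rw [e, e2, hmk a, hmk b, comm_center_left (mk_central (hf a)),
      comm_center_right (mk_central (hf b))]
    simp [commutatorElement_def]; rfl
  · intro x y _ _ hx hy
    rw [map_mul, QuotientGroup.mk_mul, hx, hy, ← QuotientGroup.mk_mul]
  · intro x _ hx
    rw [map_inv, QuotientGroup.mk_inv, hx, ← QuotientGroup.mk_inv]

lemma swap_mk {n : ℕ} (f g : MulAut (Fr n)) (hf : f ∈ IA n) (hg : g ∈ IA n) (x : Fr n) :
    (QuotientGroup.mk (f (g x)) : Fr n ⧸ L n 2) = QuotientGroup.mk (g (f x)) := by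
  have hf' : ∀ y, f y * y⁻¹ ∈ L n 1 := hf
  have hg' : ∀ y, g y * y⁻¹ ∈ L n 1 := hg
  have h1 : f (g x) = f (g x * x⁻¹) * f x := by rw [← map_mul, inv_mul_cancel_right]
  have h2 : g (f x) = g (f x * x⁻¹) * g x := by rw [← map_mul, inv_mul_cancel_right]
  have h3 : (QuotientGroup.mk (f x) : Fr n ⧸ L n 2) =
      QuotientGroup.mk (f x * x⁻¹) * QuotientGroup.mk x := by
    rw [← QuotientGroup.mk_mul, inv_mul_cancel_right]
  have h4 : (QuotientGroup.mk (g x) : Fr n ⧸ L n 2) =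
      QuotientGroup.mk (g x * x⁻¹) * QuotientGroup.mk x := by
    rw [← QuotientGroup.mk_mul, inv_mul_cancel_right]
  rw [h1, h2, QuotientGroup.mk_mul, QuotientGroup.mk_mul,
    fix_L1 f hf' (hg' x), fix_L1 g hg' (hf' x), h3, h4, ← mul_assoc, ← mul_assoc,
    Subgroup.mem_center_iff.mp (mk_central (hf' x)) (QuotientGroup.mk (g x * x⁻¹))]

lemma commIA_le (n : ℕ) : ⁅IA n, IA n⁆ ≤ KSub n 2 := by
  rw [Subgroup.commutator_le]
  intro f hf g hg
  rw [mem_KSub]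
  intro x
  rw [bridge (L n 2)]
  have happ : ⁅f, g⁆ x = f (g (f⁻¹ (g⁻¹ x))) := by
    simp [commutatorElement_def, MulAut.mul_apply]
  rw [happ, swap_mk f g hf hg]
  simp

lemma delta_exists {n : ℕ} (f : MulAut (Fr n)) (hf : ∀ x : Fr n, f x * x⁻¹ ∈ L n 2) :
    ∃ δ : (Fr n ⧸ L n 1) →* Q34 n,
      ∀ x : Fr n, δ (QuotientGroup.mk x) = QuotientGroup.mk ⟨f x * x⁻¹, hf x⟩ := by
  have hmul : ∀ a b : Fr n, (QuotientGroup.mk ⟨f (a*b) * (a*b)⁻¹, hf (a*b)⟩ : Q34 n) =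
      QuotientGroup.mk ⟨f a * a⁻¹, hf a⟩ * QuotientGroup.mk ⟨f b * b⁻¹, hf b⟩ := by
    intro a b
    rw [← QuotientGroup.mk_mul, QuotientGroup.eq, Subgroup.mem_subgroupOf]
    have e : (((⟨f (a*b) * (a*b)⁻¹, hf (a*b)⟩ : L n 2)⁻¹ *
        ((⟨f a * a⁻¹, hf a⟩ : L n 2) * (⟨f b * b⁻¹, hf b⟩ : L n 2)) : L n 2) : Fr n)
        = ⁅a, b * (f b)⁻¹⁆ := by
      show (f (a*b) * (a*b)⁻¹)⁻¹ * (f a * a⁻¹ * (f b * b⁻¹)) = ⁅a, b * (f b)⁻¹⁆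
      rw [map_mul]
      group
    rw [e]
    have hb : b * (f b)⁻¹ ∈ L n 2 := by
      have h := inv_mem (hf b); rwa [mul_inv_rev, inv_inv] at h
    exact L_succ_right a hb
  let d : Fr n →* Q34 n := MonoidHom.mk' (fun x => QuotientGroup.mk ⟨f x * x⁻¹, hf x⟩) hmul
  have kill : ∀ u ∈ L n 1, d u = 1 := by
    intro u hu
    have h3 : f u * u⁻¹ ∈ L n 3 := (bridge (L n 3) (f u) u).mpr (fix_L1 f hf hu)
    exact (QuotientGroup.eq_one_iff _).mpr (Subgroup.mem_subgroupOf.mpr h3)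
  exact ⟨QuotientGroup.lift (L n 1) d kill, fun x => rfl⟩

theorem stmt2 (n : ℕ) (hn : 3 ≤ n) :
    (∀ f ∈ ⁅IA n, IA n⁆, ∀ x : Fr n, f x * x⁻¹ ∈ L n 2) ∧
    (∀ f ∈ ⁅IA n, IA n⁆, ∀ hf : ∀ x : Fr n, f x * x⁻¹ ∈ L n 2,
      ∃ δ : (Fr n ⧸ L n 1) →* Q34 n,
        ∀ x : Fr n, δ (QuotientGroup.mk x) = QuotientGroup.mk ⟨f x * x⁻¹, hf x⟩) ∧
    (∀ f g, f ∈ ⁅IA n, IA n⁆ → g ∈ ⁅IA n, IA n⁆ →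
      ∀ (hf : ∀ x : Fr n, f x * x⁻¹ ∈ L n 2) (hg : ∀ x : Fr n, g x * x⁻¹ ∈ L n 2)
        (hfg : ∀ x : Fr n, (f * g) x * x⁻¹ ∈ L n 2)
        (δf δg δfg : (Fr n ⧸ L n 1) →* Q34 n),
        (∀ x : Fr n, δf (QuotientGroup.mk x) = QuotientGroup.mk ⟨f x * x⁻¹, hf x⟩) →
        (∀ x : Fr n, δg (QuotientGroup.mk x) = QuotientGroup.mk ⟨g x * x⁻¹, hg x⟩) →
        (∀ x : Fr n, δfg (QuotientGroup.mk x) = QuotientGroup.mk ⟨(f * g) x * x⁻¹, hfg x⟩) →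
        ∀ y, δfg y = δf y * δg y) := by
  refine ⟨fun f hf x => mem_KSub.mp (commIA_le n hf) x, fun f _ hf => delta_exists f hf, ?_⟩
  intro f g _ _ hf hg hfg δf δg δfg Hf Hg Hfg y
  refine QuotientGroup.induction_on y fun x => ?_
  rw [Hf x, Hg x, Hfg x, ← QuotientGroup.mk_mul, QuotientGroup.eq, Subgroup.mem_subgroupOf]
  set v := g x * x⁻¹ with hv
  set w := f x * x⁻¹ with hw
  have e : (((⟨(f * g) x * x⁻¹, hfg x⟩ : L n 2)⁻¹ *
      ((⟨f x * x⁻¹, hf x⟩ : L n 2) * (⟨g x * x⁻¹, hg x⟩ : L n 2)) : L n 2) : Fr n)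
      = (w⁻¹ * ((f v)⁻¹ * v) * w) * ⁅w⁻¹, v⁻¹⁆ := by
    show ((f * g) x * x⁻¹)⁻¹ * (f x * x⁻¹ * (g x * x⁻¹))
        = (w⁻¹ * ((f v)⁻¹ * v) * w) * ⁅w⁻¹, v⁻¹⁆
    have h1 : (f * g) x = f v * f x := by
      rw [MulAut.mul_apply, show g x = v * x from by rw [hv, inv_mul_cancel_right], map_mul]
    rw [h1, hv, hw]
    group
  rw [e]
  have hvL : v ∈ L n 2 := hg x
  have hwL : w ∈ L n 2 := hf x
  have t1 : (f v)⁻¹ * v ∈ L n 3 := by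
    have := fix_L1 f hf (Subgroup.lowerCentralSeries_antitone _ (by norm_num : 1 ≤ 2) hvL)
    exact (QuotientGroup.eq).mp this
  have t2 : ⁅w⁻¹, v⁻¹⁆ ∈ L n 3 := L_succ_left _ (inv_mem hwL)
  have t3 : w⁻¹ * ((f v)⁻¹ * v) * w ∈ L n 3 := by
    have := (Subgroup.Normal.conj_mem inferInstance _ t1 w⁻¹ : _)
    simpa using this
  exact mul_mem t3 t2
end

section
/- Let n ≥ 2, let H = ℤⁿ with standard basis e_1,…,e_n and dual basis e_1*,…,e_n* of Hom(H,ℤ). Then the ℤ-linear map H → ∧²H ⊗ Hom(H,ℤ) defined by e_k ↦ Σ_{i=1}^{n} (e_k ∧ e_i) ⊗ e_i* is injective. Moreover, its image is a saturated subgroup: the quotient (∧²H ⊗ Hom(H,ℤ))/image is torsion-free. -/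
open ExteriorAlgebra TensorProduct

lemma wedge_mem {M : Type*} [AddCommGroup M] [Module ℤ M] (x y : M) :
    ι ℤ x * ι ℤ y ∈ ⋀[ℤ]^2 M := by
  have h : ιMulti ℤ 2 ![x, y] = ι ℤ x * ι ℤ y := by
    simp [ιMulti_apply, List.ofFn_succ]
  exact h ▸ ιMulti_range ℤ 2 (Set.mem_range_self ![x, y])

/-- The wedge product `M × M → ∧²M` as a bilinear map. -/
def wedge (M : Type*) [AddCommGroup M] [Module ℤ M] : M →ₗ[ℤ] M →ₗ[ℤ] ↥(⋀[ℤ]^2 M) :=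
  LinearMap.mk₂ ℤ (fun x y => ⟨ι ℤ x * ι ℤ y, wedge_mem x y⟩)
    (fun x x' y => Subtype.ext (by simp [add_mul]))
    (fun c x y => Subtype.ext (by simp [smul_mul_assoc, mul_assoc]; exact zsmul_eq_mul _ _))
    (fun x y y' => Subtype.ext (by simp [mul_add]))
    (fun c x y => Subtype.ext (by simp [mul_assoc]; exact zsmul_eq_mul _ _))


/-- The map `H → ∧²H ⊗ Hom(H,ℤ)` with `e_k ↦ Σᵢ (e_k ∧ e_i) ⊗ e_i*`, where `H = ℤⁿ`. -/
noncomputable def muMap (n : ℕ) :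
    (Fin n → ℤ) →ₗ[ℤ] (↥(⋀[ℤ]^2 (Fin n → ℤ)) ⊗[ℤ] ((Fin n → ℤ) →ₗ[ℤ] ℤ)) :=
  ∑ i : Fin n,
    ((TensorProduct.mk ℤ ↥(⋀[ℤ]^2 (Fin n → ℤ)) ((Fin n → ℤ) →ₗ[ℤ] ℤ)).flip
        (LinearMap.proj i)) ∘ₗ ((wedge (Fin n → ℤ)).flip (Pi.single i 1))



def bform {n : ℕ} (a b : Fin n) : (Fin n → ℤ) [⋀^Fin 2]→ₗ[ℤ] ℤ where
  toFun v := v 0 a * v 1 b - v 0 b * v 1 a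
  map_update_add' m i x y := by
    fin_cases i <;> simp [Function.update] <;> ring
  map_update_smul' m i c x := by
    fin_cases i <;> simp [Function.update] <;> ring
  map_eq_zero_of_eq' v i j h hij := by
    fin_cases i <;> fin_cases j <;> simp_all <;> ring

noncomputable def Ffun {n : ℕ} (a b : Fin n) : ExteriorAlgebra ℤ (Fin n → ℤ) →ₗ[ℤ] ℤ :=
  liftAlternating (fun i => match i with | 2 => bform a b | _ => 0)

lemma Ffun_wedge {n : ℕ} (a b : Fin n) (x y : Fin n → ℤ) :
    Ffun a b (ι ℤ x * ι ℤ y) = x a * y b - x b * y a := by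
  rw [Ffun, liftAlternating_ι_mul, liftAlternating_ι]
  simp [bform]

noncomputable def gfun {n : ℕ} (a b c : Fin n) :
    (↥(⋀[ℤ]^2 (Fin n → ℤ)) ⊗[ℤ] ((Fin n → ℤ) →ₗ[ℤ] ℤ)) →ₗ[ℤ] ℤ :=
  TensorProduct.lift ((LinearMap.mul ℤ ℤ).compl₁₂
    ((Ffun a b).comp (Submodule.subtype _)) (LinearMap.applyₗ (Pi.single c 1)))

lemma gfun_tmul {n : ℕ} (a b c : Fin n) (ω : ↥(⋀[ℤ]^2 (Fin n → ℤ)))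
    (φ : (Fin n → ℤ) →ₗ[ℤ] ℤ) :
    gfun a b c (ω ⊗ₜ φ) = Ffun a b ω.1 * φ (Pi.single c 1) := by
  simp [gfun]
  exact TensorProduct.lift.tmul _ _

def sel {n : ℕ} (hn : 2 ≤ n) (j : Fin n) : Fin n :=
  if j.1 = 0 then ⟨1, hn⟩ else ⟨0, by omega⟩

lemma sel_ne {n : ℕ} (hn : 2 ≤ n) (j : Fin n) : sel hn j ≠ j := by
  intro h
  apply_fun Fin.val at h
  unfold sel at h
  split at h <;> simp only [Fin.val_mk] at h <;> omega

noncomputable def psiMap (n : ℕ) (hn : 2 ≤ n) :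
    (↥(⋀[ℤ]^2 (Fin n → ℤ)) ⊗[ℤ] ((Fin n → ℤ) →ₗ[ℤ] ℤ)) →ₗ[ℤ] (Fin n → ℤ) :=
  LinearMap.pi fun j => gfun j (sel hn j) (sel hn j)

lemma psi_mu (n : ℕ) (hn : 2 ≤ n) (x : Fin n → ℤ) :
    psiMap n hn (muMap n x) = x := by
  funext j
  have hμ : muMap n x = ∑ i : Fin n,
      (wedge (Fin n → ℤ) x (Pi.single i 1)) ⊗ₜ[ℤ] (LinearMap.proj i) := by
    simp [muMap, LinearMap.sum_apply]
    rfl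
  simp only [psiMap, LinearMap.pi_apply, hμ, map_sum]
  rw [Finset.sum_eq_single (sel hn j)]
  · rw [gfun_tmul]
    have : (wedge (Fin n → ℤ) x (Pi.single (sel hn j) 1)).1
        = ι ℤ x * ι ℤ (Pi.single (sel hn j) 1) := rfl
    rw [this, Ffun_wedge]
    have h1 : (Pi.single (sel hn j) 1 : Fin n → ℤ) j = 0 := by
      rw [Pi.single_apply, if_neg (by exact fun h => (sel_ne hn j) h.symm)]
    simp [LinearMap.proj_apply, h1]
  · intro i _ hi
    rw [gfun_tmul]
    simp [LinearMap.proj, Pi.single_apply, hi]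
  · exact fun h => absurd (Finset.mem_univ _) h

/-- Standard basis vector as element of `Fin n → ℤ`. -/
def ev {n : ℕ} (i : Fin n) : Fin n → ℤ := Pi.single i 1

lemma ι_mul_ι_swap {n : ℕ} (x y : Fin n → ℤ) :
    ι ℤ x * ι ℤ y = -(ι ℤ y * ι ℤ x) := by
  rw [eq_neg_iff_add_eq_zero]
  exact ι_add_mul_swap x y

lemma sq_le_span (n : ℕ) :
    (⋀[ℤ]^2 (Fin n → ℤ)) ≤ Submodule.span ℤ
      (Set.range fun p : {p : Fin n × Fin n // p.1 < p.2} =>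
        ι ℤ (ev p.1.1) * ι ℤ (ev p.1.2)) := by
  set W := Submodule.span ℤ
      (Set.range fun p : {p : Fin n × Fin n // p.1 < p.2} =>
        ι ℤ (ev p.1.1) * ι ℤ (ev p.1.2)) with hW
  have basic : ∀ a b : Fin n, ι ℤ (ev a) * ι ℤ (ev b) ∈ W := by
    intro a b
    rcases lt_trichotomy a b with h | h | h
    · exact Submodule.subset_span ⟨⟨(a, b), h⟩, rfl⟩
    · rw [h, ι_sq_zero]; exact W.zero_mem
    · rw [ι_mul_ι_swap]
      exact W.neg_mem (Submodule.subset_span ⟨⟨(b, a), h⟩, rfl⟩)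
  have key : ∀ x y : Fin n → ℤ, ι ℤ x * ι ℤ y ∈ W := by
    intro x y
    have hx : (x : Fin n → ℤ) = ∑ a : Fin n, x a • ev a := by
      funext k; simp [ev, Pi.single_apply, Finset.sum_ite_eq']
    have hy : (y : Fin n → ℤ) = ∑ b : Fin n, y b • ev b := by
      funext k; simp [ev, Pi.single_apply, Finset.sum_ite_eq']
    rw [hx, hy, map_sum, map_sum, Finset.sum_mul_sum]
    apply Submodule.sum_mem
    intro a _
    apply Submodule.sum_mem
    intro b _
    rw [map_smul, map_smul, smul_mul_smul_comm]
    exact W.smul_mem _ (basic a b)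
  rw [← ιMulti_span_fixedDegree ℤ 2, Submodule.span_le]
  rintro _ ⟨v, rfl⟩
  have h2 : ιMulti ℤ 2 v = ι ℤ (v 0) * ι ℤ (v 1) := by
    simp [ιMulti_apply, List.ofFn_succ, Matrix.vecTail, Function.comp]
  rw [h2]
  exact key _ _

lemma Ffun_basis {n : ℕ} (a b i j : Fin n) :
    Ffun a b (ι ℤ (ev i) * ι ℤ (ev j)) =
      (if a = i then if b = j then 1 else 0 else 0)
        - (if b = i then if a = j then 1 else 0 else 0) := by
  rw [Ffun_wedge]
  simp only [ev, Pi.single_apply, mul_ite, ite_mul, mul_one, mul_zero, one_mul, zero_mul]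
  split_ifs <;> norm_num

lemma eq_zero_of_forall_Ffun {n : ℕ} (ω : ExteriorAlgebra ℤ (Fin n → ℤ))
    (hω : ω ∈ ⋀[ℤ]^2 (Fin n → ℤ)) (h : ∀ a b : Fin n, Ffun a b ω = 0) : ω = 0 := by
  obtain ⟨c, hc⟩ := (Submodule.mem_span_range_iff_exists_fun ℤ).1 (sq_le_span n hω)
  suffices hzero : ∀ p, c p = 0 by
    rw [← hc]
    apply Finset.sum_eq_zero
    intro p _
    rw [hzero p, zero_smul]
  intro p
  have hp := h p.1.1 p.1.2
  rw [← hc, map_sum] at hp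
  rw [Finset.sum_eq_single p] at hp
  · rw [map_smul, Ffun_basis] at hp
    have h2 : (if p.1.2 = p.1.1 then if p.1.1 = p.1.2 then (1:ℤ) else 0 else 0) = 0 := by
      rw [if_neg]; intro h'; exact absurd (h' ▸ p.2) (lt_irrefl _)
    rw [if_pos rfl, if_pos rfl, h2] at hp
    simpa using hp
  · intro q _ hq
    rw [map_smul, Ffun_basis]
    have h2 : (if p.1.2 = q.1.1 then if p.1.1 = q.1.2 then (1:ℤ) else 0 else 0) = 0 := by
      split_ifs with hA hB
      · exfalso
        have hlt : p.1.2 < p.1.1 := by rw [hA, hB]; exact q.2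
        exact absurd (hlt.trans p.2) (lt_irrefl _)
      · rfl
      · rfl
    have h1 : (if p.1.1 = q.1.1 then if p.1.2 = q.1.2 then (1:ℤ) else 0 else 0) = 0 := by
      split_ifs with hA hB
      · exact absurd (Subtype.ext (Prod.ext hA.symm hB.symm)) hq
      · rfl
      · rfl
    rw [h1, h2]; simp
  · intro hp'; exact absurd (Finset.mem_univ p) hp'

lemma nzsd_S (n : ℕ) : NoZeroSMulDivisors ℤ ↥(⋀[ℤ]^2 (Fin n → ℤ)) := by
  constructor
  intro c ω h
  by_cases hc : c = 0
  · exact Or.inl hc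
  · refine Or.inr (Subtype.ext ?_)
    refine eq_zero_of_forall_Ffun ω.1 ω.2 fun a b => ?_
    have hval : c • ω.1 = (0 : ExteriorAlgebra ℤ (Fin n → ℤ)) := by
      have := congrArg Subtype.val h
      simpa using this
    have : Ffun a b (c • ω.1) = 0 := by rw [hval, map_zero]
    rw [map_smul, smul_eq_mul, mul_eq_zero] at this
    exact this.resolve_left hc

set_option maxHeartbeats 1000000 in
set_option synthInstance.maxHeartbeats 1000000 in
noncomputable def Tequiv (n : ℕ) :
    (↥(⋀[ℤ]^2 (Fin n → ℤ)) ⊗[ℤ] ((Fin n → ℤ) →ₗ[ℤ] ℤ)) ≃ₗ[ℤ]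
      (Fin n → ↥(⋀[ℤ]^2 (Fin n → ℤ))) :=
  (TensorProduct.congr (LinearEquiv.refl ℤ _) (LinearEquiv.piRing ℤ ℤ (Fin n) ℤ)).trans
    (TensorProduct.piScalarRight ℤ ℤ _ (Fin n))

set_option maxHeartbeats 1000000 in
set_option synthInstance.maxHeartbeats 1000000 in
lemma nzsd_T (n : ℕ) :
    NoZeroSMulDivisors ℤ (↥(⋀[ℤ]^2 (Fin n → ℤ)) ⊗[ℤ] ((Fin n → ℤ) →ₗ[ℤ] ℤ)) := by
  haveI := nzsd_S n
  constructor
  intro c t h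
  have h2 : c • Tequiv n t = 0 := by
    rw [← map_smul, h, map_zero]
  rcases smul_eq_zero.1 h2 with h3 | h3
  · exact Or.inl h3
  · refine Or.inr ((Tequiv n).injective ?_)
    rw [h3, map_zero]

set_option maxHeartbeats 1000000 in
set_option synthInstance.maxHeartbeats 1000000 in
theorem stmt15 (n : ℕ) (hn : 2 ≤ n) :
    Function.Injective ⇑(muMap n) ∧
    NoZeroSMulDivisors ℤ
      ((↥(⋀[ℤ]^2 (Fin n → ℤ)) ⊗[ℤ] ((Fin n → ℤ) →ₗ[ℤ] ℤ)) ⧸ LinearMap.range (muMap n)) := by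
  constructor
  · exact Function.LeftInverse.injective (psi_mu n hn)
  · haveI := nzsd_T n
    constructor
    intro c q h
    by_cases hc : c = 0
    · exact Or.inl hc
    obtain ⟨t, rfl⟩ := Submodule.Quotient.mk_surjective _ q
    refine Or.inr ?_
    rw [← Submodule.Quotient.mk_smul, Submodule.Quotient.mk_eq_zero] at h
    obtain ⟨x, hx⟩ := h
    have hx2 : x = c • psiMap n hn t := by
      have h3 := congrArg (psiMap n hn) hx
      rw [psi_mu, map_smul] at h3
      exact h3
    have h4 : c • t = c • muMap n (psiMap n hn t) := by
      rw [← hx, hx2, map_smul]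
    have ht : t = muMap n (psiMap n hn t) := smul_right_injective _ hc h4
    rw [Submodule.Quotient.mk_eq_zero]
    exact ⟨psiMap n hn t, ht.symm⟩
end
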